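/- If a tree T is not nearly finite (has infinitely many vertices of degree ≥ 3) and is locally finite, then the minimal subtree of T containing all vertices of degree at least 3 contains a ray, and this ray passes through infinitely many vertices of degree at least 3 in T. -/

import Mathlib

/-- A ray in a graph. -/
def IsRay {V : Type*} (G : SimpleGraph V) (r : ℕ → V) : Prop :=
  Function.Injective r ∧ ∀ n, G.Adj (r n) (r (n + 1))

/-- The minimal subtree of a tree containing a set `S` of vertices: the union of all
paths between vertices of `S` (a vertex `v` lies on the path from `a` to `b` iff
`dist a v + dist v b = dist a b`). -/
def MinSubtree {V : Type*} (G : SimpleGraph V) (S : Set V) : Set V :=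
  {v | ∃ a ∈ S, ∃ b ∈ S, G.dist a v + G.dist v b = G.dist a b}

/-- Geodesic step lemma: if `v` lies on a geodesic from `a` to `b` and `v ≠ b`, then some
neighbor `w` of `v` also lies on it, one step further from `a`. -/
lemma geo_step {V : Type*} (G : SimpleGraph V) (hc : G.Connected) (a v b : V) (hvb : v ≠ b)
    (h : G.dist a v + G.dist v b = G.dist a b) :
    ∃ w, G.Adj v w ∧ G.dist a w = G.dist a v + 1 ∧ G.dist a w + G.dist w b = G.dist a b := by
  obtain ⟨p, hp⟩ := (hc v b).exists_walk_length_eq_dist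
  cases p with
  | nil => exact absurd rfl hvb
  | @cons _ w _ hadj q =>
    have h1 : G.dist w b ≤ q.length := G.dist_le q
    have h2 : q.length + 1 = G.dist v b := by simpa using hp
    have h3 : G.dist a b ≤ G.dist a w + G.dist w b := hc.dist_triangle
    have h4 : G.dist a w ≤ G.dist a v + G.dist v w := hc.dist_triangle
    have h5 : G.dist v w = 1 := SimpleGraph.dist_eq_one_iff_adj.mpr hadj
    exact ⟨w, hadj, by omega, by omega⟩

/-- Pigeonhole step: if infinitely many vertices of `S` see `v` on their geodesic from `a`,
then some neighbor `w` of `v`, one step further from `a`, has the same property. -/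
lemma pigeon_step {V : Type*} (G : SimpleGraph V) (hc : G.Connected)
    [∀ v, Fintype (G.neighborSet v)] (S : Set V) (a v : V)
    (hv : {b | b ∈ S ∧ G.dist a v + G.dist v b = G.dist a b}.Infinite) :
    ∃ w, G.Adj v w ∧ G.dist a w = G.dist a v + 1 ∧
      {b | b ∈ S ∧ G.dist a w + G.dist w b = G.dist a b}.Infinite := by
  classical
  have hT : ({b | b ∈ S ∧ G.dist a v + G.dist v b = G.dist a b} \ {v}).Infinite :=
    hv.diff (Set.finite_singleton v)
  have hsub : ({b | b ∈ S ∧ G.dist a v + G.dist v b = G.dist a b} \ {v}) ⊆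
      ⋃ w ∈ (G.neighborFinset v : Finset V),
        {b | b ∈ S ∧ G.dist a w = G.dist a v + 1 ∧ G.dist a w + G.dist w b = G.dist a b} := by
    rintro b ⟨⟨hbS, hb⟩, hbv⟩
    obtain ⟨w, hadj, hd, hgeo⟩ := geo_step G hc a v b (fun h => hbv (h ▸ rfl)) hb
    exact Set.mem_biUnion ((SimpleGraph.mem_neighborFinset _ _ _).mpr hadj) ⟨hbS, hd, hgeo⟩
  by_contra hcon
  push_neg at hcon
  refine (hT.mono hsub) ?_
  refine Set.Finite.biUnion (Finset.finite_toSet _) ?_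
  intro w hw
  by_cases hadj : G.Adj v w
  · by_cases hd : G.dist a w = G.dist a v + 1
    · have := hcon w hadj hd
      exact this.subset fun b hb => ⟨hb.1, hb.2.2⟩
    · exact Set.Finite.subset (Set.finite_empty) (fun b hb => hd hb.2.1)
  · exact absurd (by simpa using hw) hadj

theorem aux_stmt_8 {V : Type*} (G : SimpleGraph V) (hG : G.IsTree)
    [∀ v, Fintype (G.neighborSet v)]
    (hinf : {v : V | 3 ≤ G.degree v}.Infinite) :
    ∃ r : ℕ → V, (Function.Injective r ∧ ∀ n, G.Adj (r n) (r (n + 1))) ∧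
      Set.range r ⊆ {v | ∃ a ∈ {v : V | 3 ≤ G.degree v}, ∃ b ∈ {v : V | 3 ≤ G.degree v},
        G.dist a v + G.dist v b = G.dist a b} ∧
      {n : ℕ | 3 ≤ G.degree (r n)}.Infinite := by
  classical
  obtain ⟨a, ha⟩ := hinf.nonempty
  have hc : G.Connected := hG.isConnected
  set S : Set V := {v : V | 3 ≤ G.degree v} with hS
  have key := fun v hv => pigeon_step G hc S a v hv
  choose! w hadj hdist hinf' using key
  set r : ℕ → V := fun n => w^[n] a with hr
  have hr0 : r 0 = a := rfl
  have hrs : ∀ n, r (n + 1) = w (r n) := fun n => Function.iterate_succ_apply' w n a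
  have hP : ∀ n, {b | b ∈ S ∧ G.dist a (r n) + G.dist (r n) b = G.dist a b}.Infinite := by
    intro n
    induction n with
    | zero =>
      have he : {b | b ∈ S ∧ G.dist a (r 0) + G.dist (r 0) b = G.dist a b} = S := by
        ext b; simp [hr0, SimpleGraph.dist_self]
      rw [he]; exact hinf
    | succ n ih =>
      rw [hrs n]; exact hinf' _ ih
  have hA : ∀ n, G.Adj (r n) (r (n + 1)) := fun n => by rw [hrs n]; exact hadj _ (hP n)
  have hD : ∀ n, G.dist a (r n) = n := by
    intro n; induction n with
    | zero => simp [hr0, SimpleGraph.dist_self]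
    | succ n ih => rw [hrs n, hdist _ (hP n), ih]
  have hinj : Function.Injective r := fun m n h => by
    have hm := hD m; rw [h, hD n] at hm; omega
  refine ⟨r, ⟨hinj, hA⟩, ?_, ?_⟩
  · rintro x ⟨n, rfl⟩
    obtain ⟨b, hbS, hb⟩ := (hP n).nonempty
    exact ⟨a, ha, b, hbS, hb⟩
  · apply Set.infinite_of_not_bddAbove
    rintro ⟨M, hM⟩
    set N := M + 1 with hN
    have hdeg : ∀ n, N ≤ n → G.degree (r n) ≤ 2 := by
      intro n hn
      by_contra hcon
      have : n ≤ M := hM (by simp only [Set.mem_setOf_eq]; omega)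
      omega
    obtain ⟨b, ⟨⟨hbS, hb⟩, hbne⟩⟩ := ((hP N).diff (Set.finite_singleton (r N))).nonempty
    have hbne' : ∀ n, b ≠ r n := by
      intro n he
      rcases lt_or_ge n N with h | h
      · have h1 := hb
        have h2 : G.dist a b = n := by rw [he]; exact hD n
        rw [hD N] at h1; omega
      · have h3 := hdeg n h
        rw [← he] at h3
        have : 3 ≤ G.degree b := hbS
        omega
    have hclaim : ∀ k, G.dist a (r (N + k)) + G.dist (r (N + k)) b = G.dist a b := by
      intro k; induction k with
      | zero => exact hb
      | succ k ih =>
        set n := N + k with hn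
        obtain ⟨w', hadj', hdist', hgeo'⟩ :=
          geo_step G hc a (r n) b (fun h => (hbne' n) h.symm) ih
        have hw' : w' = r (n + 1) := by
          by_contra hne
          have hne2 : w' ≠ r (n - 1) := by
            intro he
            have ht := hD (n - 1)
            rw [← he, hdist', hD n] at ht
            omega
          have h1 : r (n - 1) ∈ G.neighborFinset (r n) := by
            rw [SimpleGraph.mem_neighborFinset]
            have h4 := hA (n - 1)
            have hn1 : n - 1 + 1 = n := by omega
            rw [hn1] at h4
            exact h4.symm
          have h2 : r (n + 1) ∈ G.neighborFinset (r n) :=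
            (SimpleGraph.mem_neighborFinset _ _ _).mpr (hA n)
          have h3 : w' ∈ G.neighborFinset (r n) :=
            (SimpleGraph.mem_neighborFinset _ _ _).mpr hadj'
          have hd12 : r (n - 1) ≠ r (n + 1) := fun hh => by
            have := hinj hh; omega
          have hcard : ({w', r (n - 1), r (n + 1)} : Finset V).card = 3 := by
            rw [Finset.card_insert_of_notMem (by simp [hne, hne2]),
              Finset.card_insert_of_notMem (by simp [hd12]), Finset.card_singleton]
          have hsub : ({w', r (n - 1), r (n + 1)} : Finset V) ⊆ G.neighborFinset (r n) := by
            intro x hx; simp only [Finset.mem_insert, Finset.mem_singleton] at hx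
            rcases hx with rfl | rfl | rfl <;> assumption
          have hle := Finset.card_le_card hsub
          rw [hcard, SimpleGraph.card_neighborFinset_eq_degree] at hle
          have := hdeg n (by omega)
          omega
        have hNk : N + (k + 1) = n + 1 := by omega
        rw [hNk, ← hw']
        exact hgeo'
    have hkk := hclaim (G.dist a b + 1)
    rw [hD] at hkk
    omega

/-- If a locally finite tree has infinitely many vertices of degree ≥ 3, then the
minimal subtree containing all such vertices contains a ray which passes through
infinitely many vertices of degree at least 3. -/
theorem stmt_8 {V : Type*} (G : SimpleGraph V) (hG : G.IsTree)
    [∀ v, Fintype (G.neighborSet v)]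
    (hinf : {v : V | 3 ≤ G.degree v}.Infinite) :
    ∃ r : ℕ → V, IsRay G r ∧
      Set.range r ⊆ MinSubtree G {v : V | 3 ≤ G.degree v} ∧
      {n : ℕ | 3 ≤ G.degree (r n)}.Infinite := by
  exact aux_stmt_8 G hG hinf
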